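/- Let A₁, A₂, … be subsets of a domain D ⊆ ℂ whose limit set in D is empty. Then for every ordinal α, the derived set of order α with respect to D of the union ⋃ₙ Aₙ equals the union ⋃ₙ (Aₙ)_D^(α). -/

import Mathlib

open Filter Set Metric
open Topology

/-- Iterated (transfinite) derived set of `E` with respect to `A`:
`E_A^(0) = E`, `E_A^(α+1) = (E_A^(α))' ∩ A`, and at limit stages the
intersection over `1 ≤ β < α`. -/
noncomputable def derivIter (A : Set ℂ) (E : Set ℂ) (o : Ordinal) : Set ℂ :=
  Ordinal.limitRecOn o E
    (fun _ ih => {z | z ∈ A ∧ AccPt z (Filter.principal ih)})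
    (fun o _ ih => ⋂ (β : Ordinal) (h : β < o) (_ : 1 ≤ β), ih β h)

/-- The limit set in `D` of a sequence of sets `A n`: the points `z ∈ D` such that
for every `ε > 0` and every `N` there is `n ≥ N` with `A n` meeting `Δ(z, ε)`. -/
def limitSetIn (D : Set ℂ) (A : ℕ → Set ℂ) : Set ℂ :=
  {z | z ∈ D ∧ ∀ ε > (0 : ℝ), ∀ N : ℕ, ∃ n ≥ N, (A n ∩ Metric.ball z ε).Nonempty}

lemma derivIter_zero (A E : Set ℂ) : derivIter A E 0 = E :=
  Ordinal.limitRecOn_zero ..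

lemma derivIter_succ (A E : Set ℂ) (o : Ordinal) :
    derivIter A E (Order.succ o) = {z | z ∈ A ∧ AccPt z (𝓟 (derivIter A E o))} :=
  Ordinal.limitRecOn_succ ..

lemma derivIter_limit (A E : Set ℂ) {o : Ordinal} (ho : Order.IsSuccLimit o) :
    derivIter A E o = ⋂ (β : Ordinal) (_ : β < o) (_ : 1 ≤ β), derivIter A E β :=
  Ordinal.limitRecOn_limit _ _ _ _ ho

lemma accPt_mono' {S T : Set ℂ} {z : ℂ} (h : AccPt z (𝓟 S)) (hST : S ⊆ T) :
    AccPt z (𝓟 T) :=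
  h.mono (principal_mono.2 hST)

lemma derivIter_mono (A : Set ℂ) {E F : Set ℂ} (h : E ⊆ F) :
    ∀ o, derivIter A E o ⊆ derivIter A F o := by
  intro o
  induction o using Ordinal.induction with
  | h o IH =>
    rcases Ordinal.zero_or_succ_or_isSuccLimit o with rfl | ⟨p, rfl⟩ | hl
    · rw [derivIter_zero, derivIter_zero]; exact h
    · rw [derivIter_succ, derivIter_succ]
      rintro z ⟨hzA, hz⟩
      exact ⟨hzA, accPt_mono' hz (IH p (Order.lt_succ p))⟩
    · rw [derivIter_limit _ _ hl, derivIter_limit _ _ hl]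
      intro z hz
      simp only [Set.mem_iInter] at hz ⊢
      exact fun β hβ h1 => IH β hβ (hz β hβ h1)

lemma derivIter_subset_closure (A E : Set ℂ) : ∀ o, derivIter A E o ⊆ closure E := by
  intro o
  induction o using Ordinal.induction with
  | h o IH =>
    rcases Ordinal.zero_or_succ_or_isSuccLimit o with rfl | ⟨p, rfl⟩ | hl
    · rw [derivIter_zero]; exact subset_closure
    · rw [derivIter_succ]
      rintro z ⟨_, hz⟩
      have h1 : z ∈ closure (derivIter A E p) :=
        mem_closure_iff_clusterPt.2 (hz.clusterPt)
      have := closure_mono (IH p (Order.lt_succ p)) h1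
      rwa [closure_closure] at this
    · rw [derivIter_limit _ _ hl]
      intro z hz
      simp only [Set.mem_iInter] at hz
      have h1 : (1 : Ordinal) < o := by
        have := hl.succ_lt hl.pos
        simpa using this
      exact IH 1 h1 (hz 1 h1 le_rfl)

/-- the derived set of the set of accumulation points is contained in it (T1). -/
lemma accPt_of_accPt_accSet {S : Set ℂ} {z : ℂ}
    (h : AccPt z (𝓟 {w | AccPt w (𝓟 S)})) : AccPt z (𝓟 S) := by
  rw [accPt_iff_nhds] at h ⊢
  intro U hU
  obtain ⟨w, ⟨hwU, hw⟩, hwz⟩ := h (interior U) (interior_mem_nhds.2 hU)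
  rw [Set.mem_setOf_eq, accPt_iff_nhds] at hw
  have hV : interior U ∩ {z}ᶜ ∈ 𝓝 w := by
    apply IsOpen.mem_nhds (isOpen_interior.inter (isOpen_compl_singleton))
    exact ⟨hwU, hwz⟩
  obtain ⟨y, ⟨⟨hyU, hyz⟩, hyS⟩, hyw⟩ := hw _ hV
  exact ⟨y, ⟨interior_subset hyU, hyS⟩, hyz⟩

lemma derivIter_acc_mem (A E : Set ℂ) :
    ∀ o, 1 ≤ o → ∀ z, AccPt z (𝓟 (derivIter A E o)) → z ∈ A → z ∈ derivIter A E o := by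
  intro o
  induction o using Ordinal.induction with
  | h o IH =>
    intro h1 z hz hzA
    rcases Ordinal.zero_or_succ_or_isSuccLimit o with rfl | ⟨p, rfl⟩ | hl
    · exact absurd h1 (by simp)
    · rw [derivIter_succ] at hz ⊢
      refine ⟨hzA, accPt_of_accPt_accSet (accPt_mono' hz ?_)⟩
      exact fun w hw => hw.2
    · rw [derivIter_limit _ _ hl] at hz ⊢
      simp only [Set.mem_iInter]
      intro β hβ h1β
      refine IH β hβ h1β z (accPt_mono' hz ?_) hzA
      exact Set.biInter_subset_of_mem hβ |>.trans (by exact Set.iInter_subset _ h1β)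

lemma derivIter_antitone (A E : Set ℂ) :
    ∀ o β, 1 ≤ β → β ≤ o → derivIter A E o ⊆ derivIter A E β := by
  intro o
  induction o using Ordinal.induction with
  | h o IH =>
    intro β h1 hβo
    rcases eq_or_lt_of_le hβo with rfl | hlt
    · exact subset_rfl
    rcases Ordinal.zero_or_succ_or_isSuccLimit o with rfl | ⟨p, rfl⟩ | hl
    · exact absurd hlt (by simp)
    · have hβp : β ≤ p := Order.lt_succ_iff.1 hlt
      have h1p : (1 : Ordinal) ≤ p := h1.trans hβp
      have hstep : derivIter A E (Order.succ p) ⊆ derivIter A E p := by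
        rw [derivIter_succ]
        rintro z ⟨hzA, hz⟩
        exact derivIter_acc_mem A E p h1p z hz hzA
      exact hstep.trans (IH p (Order.lt_succ p) β h1 hβp)
    · rw [derivIter_limit _ _ hl]
      intro z hz
      simp only [Set.mem_iInter] at hz
      exact hz β hlt h1

lemma accPt_inter_of_mem_nhds {S U : Set ℂ} {z : ℂ} (hU : U ∈ 𝓝 z)
    (h : AccPt z (𝓟 S)) : AccPt z (𝓟 (S ∩ U)) := by
  rw [accPt_iff_frequently] at h ⊢
  have : ∀ᶠ y in 𝓝 z, y ∈ U := hU
  exact (h.and_eventually this).mono (fun y ⟨⟨h1, h2⟩, h3⟩ => ⟨h1, h2, h3⟩)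

lemma accPt_biUnion_finset {S : ℕ → Set ℂ} {z : ℂ} :
    ∀ N, AccPt z (𝓟 (⋃ n ∈ Finset.range N, S n)) → ∃ n < N, AccPt z (𝓟 (S n)) := by
  intro N
  induction N with
  | zero =>
    intro h
    simp only [Finset.range_zero, Finset.notMem_empty, Set.iUnion_of_empty,
      Set.iUnion_empty, principal_empty] at h
    exact absurd (inf_bot_eq _) h.ne
  | succ N IH =>
    intro h
    have : (⋃ n ∈ Finset.range (N + 1), S n) = (⋃ n ∈ Finset.range N, S n) ∪ S N := by
      rw [Finset.range_add_one]
      simp [Set.biUnion_insert, Set.union_comm]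
    rw [this, ← Filter.sup_principal] at h
    rcases accPt_sup.1 h with h' | h'
    · obtain ⟨n, hn, hacc⟩ := IH h'
      exact ⟨n, Nat.lt_succ_of_lt hn, hacc⟩
    · exact ⟨N, Nat.lt_succ_self N, h'⟩

theorem stmt_9 (D : Set ℂ) (hD : IsOpen D) (hDc : IsConnected D)
    (A : ℕ → Set ℂ) (hA : ∀ n, A n ⊆ D) (hlim : limitSetIn D A = ∅) :
    ∀ α : Ordinal, derivIter D (⋃ n, A n) α = ⋃ n, derivIter D (A n) α := by
  have key : ∀ z ∈ D, ∃ ε > (0:ℝ), ∃ N : ℕ, ∀ n ≥ N, closure (A n) ∩ ball z ε = ∅ := by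
    intro z hz
    have hzn : z ∉ limitSetIn D A := by rw [hlim]; exact Set.notMem_empty z
    rw [limitSetIn, Set.mem_setOf_eq] at hzn
    push_neg at hzn
    obtain ⟨ε, hε, N, hN⟩ := hzn hz
    refine ⟨ε, hε, N, fun n hn => ?_⟩
    have h1 : A n ∩ ball z ε = ∅ := hN n hn
    have h2 : A n ⊆ (ball z ε)ᶜ := by
      intro w hw hwb
      exact Set.eq_empty_iff_forall_notMem.1 h1 w ⟨hw, hwb⟩
    have h3 : closure (A n) ⊆ (ball z ε)ᶜ :=
      closure_minimal h2 isOpen_ball.isClosed_compl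
    rw [Set.eq_empty_iff_forall_notMem]
    rintro w ⟨hw1, hw2⟩; exact h3 hw1 hw2
  intro α
  induction α using Ordinal.induction with
  | h o IH =>
    rcases Ordinal.zero_or_succ_or_isSuccLimit o with rfl | ⟨p, rfl⟩ | hl
    · simp [derivIter_zero]
    · ext z
      simp only [derivIter_succ, Set.mem_setOf_eq, Set.mem_iUnion]
      constructor
      · rintro ⟨hzD, hacc⟩
        rw [IH p (Order.lt_succ p)] at hacc
        obtain ⟨ε, hε, N, hN⟩ := key z hzD
        have h2 := accPt_inter_of_mem_nhds (ball_mem_nhds z hε) hacc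
        have h3 : (⋃ n, derivIter D (A n) p) ∩ ball z ε ⊆
            ⋃ n ∈ Finset.range N, derivIter D (A n) p := by
          rintro w ⟨hw, hwb⟩
          obtain ⟨n, hwn⟩ := Set.mem_iUnion.1 hw
          have hnN : n < N := by
            by_contra hc
            push_neg at hc
            have hcl : w ∈ closure (A n) := derivIter_subset_closure D (A n) p hwn
            exact Set.eq_empty_iff_forall_notMem.1 (hN n hc) w ⟨hcl, hwb⟩
          exact Set.mem_biUnion (Finset.mem_range.2 hnN) hwn
        obtain ⟨n, _, hn⟩ := accPt_biUnion_finset N (accPt_mono' h2 h3)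
        exact ⟨n, hzD, hn⟩
      · rintro ⟨n, hzD, hacc⟩
        refine ⟨hzD, ?_⟩
        rw [IH p (Order.lt_succ p)]
        exact accPt_mono' hacc (Set.subset_iUnion (fun n => derivIter D (A n) p) n)
    · ext z
      rw [derivIter_limit _ _ hl]
      simp only [Set.mem_iInter, Set.mem_iUnion]
      have h1o : (1:Ordinal) < o := by simpa using hl.succ_lt hl.pos
      constructor
      · intro hz
        have hz' : ∀ β, β < o → 1 ≤ β → z ∈ ⋃ n, derivIter D (A n) β := by
          intro β hβ h1
          rw [← IH β hβ]; exact hz β hβ h1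
        have hzD : z ∈ D := by
          obtain ⟨n, hn⟩ := Set.mem_iUnion.1 (hz' 1 h1o le_rfl)
          have h10 : (1:Ordinal) = Order.succ 0 := by simp
          rw [h10, derivIter_succ] at hn
          exact hn.1
        obtain ⟨ε, hε, N, hN⟩ := key z hzD
        have hnot : ∀ n, N ≤ n → ∀ β, β < o → 1 ≤ β → z ∉ derivIter D (A n) β := by
          intro n hn β hβ h1 hmem
          have hcl : z ∈ closure (A n) := derivIter_subset_closure D (A n) β hmem
          exact Set.eq_empty_iff_forall_notMem.1 (hN n hn) z ⟨hcl, mem_ball_self hε⟩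
        by_contra hcon
        push_neg at hcon
        have hchoice : ∀ n, ∃ β, β < o ∧ 1 ≤ β ∧ z ∉ derivIter D (A n) β := by
          intro n
          have hc := hcon n
          rw [derivIter_limit _ _ hl] at hc
          simp only [Set.mem_iInter, not_forall] at hc
          obtain ⟨β, hβ, h1, hmem⟩ := hc
          exact ⟨β, hβ, h1, hmem⟩
        choose f hf1 hf2 hf3 using hchoice
        set γ : Ordinal := 1 ⊔ (Finset.range N).sup f with hγdef
        have hγo : γ < o := by
          refine sup_lt_iff.2 ⟨h1o, ?_⟩
          refine (Finset.sup_lt_iff (by simpa using hl.pos)).2 (fun n _ => hf1 n)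
        have h1γ : (1:Ordinal) ≤ γ := le_sup_left
        obtain ⟨m, hm⟩ := Set.mem_iUnion.1 (hz' γ hγo h1γ)
        have hmN : m < N := by
          by_contra hc; push_neg at hc
          exact hnot m hc γ hγo h1γ hm
        have hfm : f m ≤ γ := le_sup_of_le_right (Finset.le_sup (Finset.mem_range.2 hmN))
        exact hf3 m (derivIter_antitone D (A m) γ (f m) (hf2 m) hfm hm)
      · rintro ⟨n, hn⟩ β hβ h1
        rw [IH β hβ]
        rw [derivIter_limit _ _ hl] at hn
        simp only [Set.mem_iInter] at hn
        exact Set.mem_iUnion.2 ⟨n, hn β hβ h1⟩
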